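/- Fix d ≥ 1, k ≥ 1, a vector m = (m_1,…,m_k) of positive integers, a vector p = (p_1,…,p_k) of polynomials in ℤ[i_1,…,i_d, n] of total degree at most one, finite step sets S_r ⊆ ℤ^d indexed by r ∈ Π_{q=1}^{k}{0,…,m_q−1}, and a starting point i_0 ∈ ℤ^d. Let S be the disjoint union of the sets S_r, formally the set of pairs (r, u) with u ∈ S_r. For indices r, s define S_r^s = {u ∈ S_r : for all (z, n) ∈ ℤ^d × ℕ with p(z,n) ≡ r (mod m), one has p(z+u, n+1) ≡ s (mod m)}. A walk of length N starting at i_0 in the model is a sequence (r_1,u_1), …, (r_N,u_N) of elements of S such that, with positions z_0 = i_0 and z_t = z_{t−1} + u_t, one has p(z_{t−1}, t−1) ≡ r_t (mod m) for t = 1,…,N; the vector associated to the walk is the function a : S → ℕ where a(r,u) is the number of indices t with (r_t, u_t) = (r, u). Then, for a function a : S → ℕ with N = Σ_{(r,u)∈S} a(r,u), there exists a walk starting at i_0 whose associated vector is a if and only if there exists a sequence r_0, r_1, …, r_N of indices in Π_{q=1}^{k}{0,…,m_q−1} such that p(i_0, 0) ≡ r_0 (mod m) and, for every pair of indices (r,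 s), the number of t ∈ {1,…,N} with (r_{t−1}, r_t) = (r, s) equals Σ_{u ∈ S_r^s} a(r,u) (i.e., the directed multigraph with the index vectors as vertices and Σ_{u∈S_r^s} a(r,u) edges from r to s has an Eulerian path starting at r_0). -/

import Mathlib

open scoped Classical
set_option maxHeartbeats 1000000

lemma list_count_card {β : Type*} [DecidableEq β] (L : List β) (u : β) :
    (Finset.univ.filter (fun i : Fin L.length => L.get i = u)).card = L.count u := by
  induction L with
  | nil => simp
  | cons a L ih =>
    rw [Finset.card_filter] at ih ⊢
    calc (∑ i : Fin (a::L).length, if (a :: L).get i = u then 1 else 0)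
        = (∑ i : Fin (L.length+1), if (a :: L).get ((finCongr rfl) i) = u then 1 else 0) := rfl
      _ = (if a = u then 1 else 0) + ∑ i : Fin L.length, if L.get i = u then 1 else 0 := by
          rw [Fin.sum_univ_succ]; rfl
      _ = List.count u (a :: L) := by
          rw [ih, List.count_cons]
          by_cases h : a = u <;> simp [h] <;> omega

lemma exists_fiber_counts {β : Type*} [DecidableEq β] [Inhabited β] {n : ℕ}
    (F : Finset (Fin n)) (X : Finset β) (f : β → ℕ)
    (hcard : F.card = ∑ u ∈ X, f u) :
    ∃ g : Fin n → β, (∀ t ∈ F, g t ∈ X) ∧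
      (∀ u ∈ X, (F.filter (fun t => g t = u)).card = f u) := by
  classical
  set M : Multiset β := ∑ u ∈ X, Multiset.replicate (f u) u with hM
  have hMcard : Multiset.card M = F.card := by
    rw [hcard, hM]
    induction X using Finset.cons_induction with
    | empty => simp
    | cons u X hu ih => simp [Finset.sum_cons, ih]
  set L := M.toList with hL
  have hlen : L.length = F.card := by rw [hL, Multiset.length_toList, hMcard]
  have hmemX : ∀ x ∈ L, x ∈ X := by
    intro x hx
    rw [hL, Multiset.mem_toList, hM] at hx
    rcases Multiset.mem_sum.1 hx with ⟨u, hu, hx⟩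
    rcases Multiset.eq_of_mem_replicate hx with rfl
    exact hu
  set e := F.equivFin with he
  set g : Fin n → β := fun t => if h : t ∈ F then L.get (Fin.cast hlen.symm (e ⟨t, h⟩)) else default with hg
  refine ⟨g, ?_, ?_⟩
  · intro t ht
    rw [hg]
    simp only [dif_pos ht]
    exact hmemX _ (L.get_mem _)
  · intro u hu
    have hcnt : L.count u = f u := by
      rw [hL, ← Multiset.coe_count, Multiset.coe_toList, hM, Multiset.count_sum']
      rw [Finset.sum_eq_single u]
      · simp [Multiset.count_replicate]
      · intro b hb hbu; simp [Multiset.count_replicate, hbu]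
      · intro h; exact absurd hu h
    rw [← hcnt, ← list_count_card L u]
    apply Finset.card_bij (fun t ht => Fin.cast hlen.symm (e ⟨t, (Finset.mem_filter.1 ht).1⟩))
    · intro t ht
      have ht' := Finset.mem_filter.1 ht
      simp only [Finset.mem_filter, Finset.mem_univ, true_and]
      have h2 : g t = u := ht'.2
      rw [hg] at h2
      simpa [dif_pos ht'.1] using h2
    · intro t1 h1 t2 h2 heq
      have h3 := Fin.cast_injective hlen.symm heq
      have h4 := e.injective h3
      exact congrArg Subtype.val h4
    · intro i hi
      refine ⟨(e.symm (Fin.cast hlen i)).1, Finset.mem_filter.2 ⟨(e.symm (Fin.cast hlen i)).2, ?_⟩, ?_⟩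
      · rw [hg]
        simp only [dif_pos (e.symm (Fin.cast hlen i)).2]
        have h5 : e ⟨(e.symm (Fin.cast hlen i)).1, (e.symm (Fin.cast hlen i)).2⟩ = Fin.cast hlen i := by
          simpa using e.apply_symm_apply (Fin.cast hlen i)
        rw [h5]
        simpa using (Finset.mem_filter.1 hi).2
      · have h5 : e ⟨(e.symm (Fin.cast hlen i)).1, (e.symm (Fin.cast hlen i)).2⟩ = Fin.cast hlen i := by
          simpa using e.apply_symm_apply (Fin.cast hlen i)
        rw [h5]
        simp

def resid {k : ℕ} (m : Fin k → ℕ) (hm : ∀ q, 0 < m q) (v : Fin k → ℤ) : ∀ q, Fin (m q) :=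
  fun q => ⟨(v q % (m q : ℤ)).toNat, by
    have h0 : (m q : ℤ) ≠ 0 := by exact_mod_cast (hm q).ne'
    have h1 := Int.emod_nonneg (v q) h0
    have h2 := Int.emod_lt_of_pos (v q) (by exact_mod_cast hm q : (0:ℤ) < (m q : ℤ))
    omega⟩

lemma resid_spec {k : ℕ} (m : Fin k → ℕ) (hm : ∀ q, 0 < m q) (v : Fin k → ℤ) (q : Fin k) :
    ((resid m hm v q : ℕ) : ℤ) = v q % (m q : ℤ) := by
  have h0 : (m q : ℤ) ≠ 0 := by exact_mod_cast (hm q).ne'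
  have h1 := Int.emod_nonneg (v q) h0
  simp [resid, Int.toNat_of_nonneg h1]

lemma resid_eq {k : ℕ} (m : Fin k → ℕ) (hm : ∀ q, 0 < m q) (v : Fin k → ℤ)
    (r : ∀ q, Fin (m q)) (hv : ∀ q, v q % (m q : ℤ) = ((r q : ℕ) : ℤ)) :
    resid m hm v = r := by
  funext q
  apply Fin.ext
  have h1 : ((resid m hm v q : ℕ) : ℤ) = ((r q : ℕ) : ℤ) := by rw [resid_spec, hv q]
  exact_mod_cast h1

def clsv {d k : ℕ} (m : Fin k → ℕ) (hm : ∀ q, 0 < m q) (γ : Fin k → ℤ) (α : Fin k → Fin d → ℤ)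
    (r : ∀ q, Fin (m q)) (u : Fin d → ℤ) : ∀ q, Fin (m q) :=
  resid m hm (fun q => ((r q : ℕ) : ℤ) + ((∑ l, α q l * u l) + γ q))

lemma step_mod {d k : ℕ} (m : Fin k → ℕ) (hm : ∀ q, 0 < m q)
    (c γ : Fin k → ℤ) (α : Fin k → Fin d → ℤ)
    (pEval : (Fin d → ℤ) → ℤ → Fin k → ℤ)
    (hp : ∀ z n q, pEval z n q = c q + (∑ l, α q l * z l) + γ q * n)
    (z u : Fin d → ℤ) (n : ℤ) (r : ∀ q, Fin (m q))
    (h : ∀ q, pEval z n q % (m q : ℤ) = ((r q : ℕ) : ℤ)) (q : Fin k) :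
    pEval (z + u) (n + 1) q % (m q : ℤ) = ((clsv m hm γ α r u q : ℕ) : ℤ) := by
  have hD : pEval (z + u) (n + 1) q = pEval z n q + ((∑ l, α q l * u l) + γ q) := by
    rw [hp, hp]
    simp only [Pi.add_apply, mul_add, Finset.sum_add_distrib]
    ring
  have hr : ((r q : ℕ) : ℤ) % (m q : ℤ) = ((r q : ℕ) : ℤ) :=
    Int.emod_eq_of_lt (by positivity) (by exact_mod_cast (r q).2)
  rw [clsv, resid_spec, hD]
  conv_lhs => rw [Int.add_emod, h q]
  conv_rhs => rw [Int.add_emod, hr]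

def posW {d N : ℕ} (i0 : Fin d → ℤ) (up : Fin N → (Fin d → ℤ)) (j : ℕ) : Fin d → ℤ :=
  i0 + ∑ t' ∈ Finset.univ.filter (fun t' : Fin N => (t' : ℕ) < j), up t'

lemma posW_zero {d N : ℕ} (i0 : Fin d → ℤ) (up : Fin N → (Fin d → ℤ)) :
    posW i0 up 0 = i0 := by
  have : Finset.univ.filter (fun t' : Fin N => (t' : ℕ) < 0) = ∅ := by
    apply Finset.filter_false_of_mem; intro t _; omega
  simp [posW, this]

lemma posW_succ {d N : ℕ} (i0 : Fin d → ℤ) (up : Fin N → (Fin d → ℤ)) (t : Fin N) :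
    posW i0 up ((t : ℕ) + 1) = posW i0 up (t : ℕ) + up t := by
  have hins : Finset.univ.filter (fun t' : Fin N => (t' : ℕ) < (t : ℕ) + 1)
      = insert t (Finset.univ.filter (fun t' : Fin N => (t' : ℕ) < (t : ℕ))) := by
    ext t'
    simp only [Finset.mem_filter, Finset.mem_univ, true_and, Finset.mem_insert]
    constructor
    · intro h
      rcases Nat.lt_succ_iff_lt_or_eq.1 h with h | h
      · exact Or.inr h
      · exact Or.inl (Fin.ext h)
    · rintro (rfl | h) <;> omega
  have hnm : t ∉ Finset.univ.filter (fun t' : Fin N => (t' : ℕ) < (t : ℕ)) := by simp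
  rw [posW, posW, hins, Finset.sum_insert hnm]
  funext l
  simp
  ring

lemma posW_eq_Iio {d N : ℕ} (i0 : Fin d → ℤ) (up : Fin N → (Fin d → ℤ)) (t : Fin N) :
    posW i0 up (t : ℕ) = i0 + ∑ t' ∈ Finset.Iio t, up t' := by
  rw [posW]
  congr 1
  apply Finset.sum_congr _ (fun _ _ => rfl)
  ext t'
  simp only [Finset.mem_filter, Finset.mem_univ, true_and, Finset.mem_Iio, Fin.lt_def]

theorem associated_vector_iff_eulerian_path
    (d : ℕ) (hd : 1 ≤ d) (k : ℕ) (hk : 1 ≤ k)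
    (m : Fin k → ℕ) (hm : ∀ q, 0 < m q)
    -- p = (p₁,…,p_k), affine polynomials in (i₁,…,i_d, n):
    -- p q = c q + Σ_l α q l · i_l + γ q · n
    (c γ : Fin k → ℤ) (α : Fin k → Fin d → ℤ)
    (pEval : (Fin d → ℤ) → ℤ → Fin k → ℤ)
    (hp : ∀ z n q, pEval z n q = c q + (∑ l, α q l * z l) + γ q * n)
    -- step sets S_r ⊆ ℤ^d indexed by residues r ∈ Π_q {0,…,m_q−1}
    (S : (∀ q, Fin (m q)) → Finset (Fin d → ℤ))
    -- starting point i₀ ∈ ℤ^d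
    (i0 : Fin d → ℤ)
    -- a vector a : S → ℕ on the disjoint union of the step sets, of total weight N
    (a : (∀ q, Fin (m q)) → (Fin d → ℤ) → ℕ)
    (ha : ∀ r u, u ∉ S r → a r u = 0)
    (N : ℕ) (hN : N = ∑ r : (∀ q, Fin (m q)), ∑ u ∈ S r, a r u) :
    -- there is a walk starting at i₀ whose associated vector is a ...
    ((∃ (st : Fin N → (∀ q, Fin (m q))) (up : Fin N → (Fin d → ℤ)),
        (∀ t, up t ∈ S (st t)) ∧
        (∀ (t : Fin N) (q : Fin k),
          pEval (i0 + ∑ t' ∈ Finset.Iio t, up t') (t : ℤ) q % (m q : ℤ)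
            = ((st t q : ℕ) : ℤ)) ∧
        (∀ r u, a r u =
          (Finset.univ.filter (fun t : Fin N => st t = r ∧ up t = u)).card))
      ↔
      -- ... iff the multigraph with Σ_{u ∈ S_r^s} a(r,u) edges from r to s has an
      -- Eulerian path starting at a vertex r₀ with p(i₀,0) ≡ r₀ (mod m)
      (∃ seq : Fin (N + 1) → (∀ q, Fin (m q)),
        (∀ q : Fin k, pEval i0 0 q % (m q : ℤ) = ((seq 0 q : ℕ) : ℤ)) ∧
        ∀ r s : (∀ q, Fin (m q)),
          (Finset.univ.filter
            (fun t : Fin N => seq t.castSucc = r ∧ seq t.succ = s)).card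
          = ∑ u ∈ (S r).filter (fun u => ∀ (z : Fin d → ℤ) (n : ℕ),
              (∀ q, pEval z (n : ℤ) q % (m q : ℤ) = ((r q : ℕ) : ℤ)) →
              (∀ q, pEval (z + u) ((n : ℤ) + 1) q % (m q : ℤ) = ((s q : ℕ) : ℤ))),
            a r u)) := by
  classical
  constructor
  · rintro ⟨st, up, hS, hRes, hCnt⟩
    have hRes' : ∀ (t : Fin N) (q : Fin k),
        pEval (posW i0 up (t : ℕ)) (((t : ℕ) : ℤ)) q % (m q : ℤ) = ((st t q : ℕ) : ℤ) := by
      intro t q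
      rw [posW_eq_Iio]
      exact hRes t q
    refine ⟨fun j : Fin (N+1) => resid m hm (fun q => pEval (posW i0 up (j : ℕ)) (((j : ℕ) : ℤ)) q), ?_, ?_⟩
    · intro q
      rw [resid_spec]
      norm_num [posW_zero]
    · intro r s
      have hcs : ∀ t : Fin N,
          resid m hm (fun q => pEval (posW i0 up ((t.castSucc : Fin (N+1)) : ℕ)) ((((t.castSucc : Fin (N+1)) : ℕ) : ℤ)) q) = st t := by
        intro t
        exact resid_eq _ _ _ _ (hRes' t)
      have hsc : ∀ t : Fin N,
          resid m hm (fun q => pEval (posW i0 up ((t.succ : Fin (N+1)) : ℕ)) ((((t.succ : Fin (N+1)) : ℕ) : ℤ)) q) = clsv m hm γ α (st t) (up t) := by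
        intro t
        apply resid_eq
        intro q
        have h2 := step_mod m hm c γ α pEval hp (posW i0 up (t : ℕ)) (up t) (((t : ℕ) : ℤ)) (st t) (hRes' t) q
        have hv : ((t.succ : Fin (N+1)) : ℕ) = (t : ℕ) + 1 := Fin.val_succ t
        rw [hv, posW_succ]
        have hc : ((((t : ℕ) + 1 : ℕ)) : ℤ) = (((t : ℕ) : ℤ)) + 1 := by push_cast; ring
        rw [hc]
        exact h2
      have hfe : (Finset.univ.filter (fun t : Fin N =>
            (fun j : Fin (N+1) => resid m hm (fun q => pEval (posW i0 up (j : ℕ)) (((j : ℕ) : ℤ)) q)) t.castSucc = r ∧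
            (fun j : Fin (N+1) => resid m hm (fun q => pEval (posW i0 up (j : ℕ)) (((j : ℕ) : ℤ)) q)) t.succ = s))
          = Finset.univ.filter (fun t : Fin N => st t = r ∧ clsv m hm γ α r (up t) = s) := by
        ext t
        simp only [Finset.mem_filter, Finset.mem_univ, true_and]
        rw [hcs t, hsc t]
        constructor
        · rintro ⟨rfl, h2⟩; exact ⟨rfl, h2⟩
        · rintro ⟨rfl, h2⟩; exact ⟨rfl, h2⟩
      rw [hfe]
      have hcard1 : (Finset.univ.filter (fun t : Fin N => st t = r ∧ clsv m hm γ α r (up t) = s)).card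
          = ∑ u ∈ (S r).filter (fun u => clsv m hm γ α r u = s),
              (Finset.univ.filter (fun t' : Fin N => st t' = r ∧ up t' = u)).card := by
        rw [Finset.card_eq_sum_card_fiberwise (f := up)
          (t := (S r).filter (fun u => clsv m hm γ α r u = s))
          (by
            intro t ht
            rw [Finset.mem_coe, Finset.mem_filter] at ht
            obtain ⟨-, h1, h2⟩ := ht
            exact Finset.mem_filter.2 ⟨h1 ▸ hS t, h2⟩)]
        apply Finset.sum_congr rfl
        intro u hu
        congr 1
        ext t
        simp only [Finset.mem_filter, Finset.mem_univ, true_and]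
        constructor
        · rintro ⟨⟨h1, h2⟩, h3⟩; exact ⟨h1, h3⟩
        · rintro ⟨h1, h3⟩
          exact ⟨⟨h1, by rw [h3]; exact (Finset.mem_filter.1 hu).2⟩, h3⟩
      rw [hcard1]
      have hsum1 : ∑ u ∈ (S r).filter (fun u => clsv m hm γ α r u = s),
          (Finset.univ.filter (fun t' : Fin N => st t' = r ∧ up t' = u)).card
          = ∑ u ∈ (S r).filter (fun u => clsv m hm γ α r u = s), a r u :=
        Finset.sum_congr rfl (fun u _ => (hCnt r u).symm)
      rw [hsum1]
      -- now show the T-sum equals the P-sum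
      by_cases hex : ∃ t : Fin N, st t = r
      · obtain ⟨t0, ht0⟩ := hex
        have hatt : ∀ q, pEval (posW i0 up (t0 : ℕ)) ((((t0 : ℕ) : ℕ)) : ℤ) q % (m q : ℤ) = ((r q : ℕ) : ℤ) := by
          intro q
          rw [← ht0]
          exact hRes' t0 q
        apply Finset.sum_congr _ (fun _ _ => rfl)
        ext u
        simp only [Finset.mem_filter]
        constructor
        · rintro ⟨h1, h2⟩
          refine ⟨h1, ?_⟩
          intro z n hz q
          have h3 := step_mod m hm c γ α pEval hp z u ((n : ℕ) : ℤ) r hz q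
          rw [h2] at h3
          exact h3
        · rintro ⟨h1, hP⟩
          refine ⟨h1, ?_⟩
          have h4 := hP (posW i0 up (t0 : ℕ)) (t0 : ℕ) hatt
          funext q
          apply Fin.ext
          have h5 := step_mod m hm c γ α pEval hp (posW i0 up (t0 : ℕ)) u (((t0 : ℕ)) : ℤ) r
            (fun q => hatt q) q
          have h6 := h4 q
          have h7 : ((clsv m hm γ α r u q : ℕ) : ℤ) = ((s q : ℕ) : ℤ) := by
            rw [← h5]; exact h6
          exact_mod_cast h7
      · push_neg at hex
        have hz : ∀ u, a r u = 0 := by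
          intro u
          rw [hCnt r u]
          rw [Finset.card_eq_zero, Finset.eq_empty_iff_forall_notMem]
          intro t ht
          rw [Finset.mem_filter] at ht
          exact hex t ht.2.1
        simp [hz]
  · rintro ⟨seq, h0, hEdge⟩
    have hTsubP : ∀ r s : (∀ q, Fin (m q)),
        (S r).filter (fun u => clsv m hm γ α r u = s) ⊆
        (S r).filter (fun u => ∀ (z : Fin d → ℤ) (n : ℕ),
          (∀ q, pEval z (n : ℤ) q % (m q : ℤ) = ((r q : ℕ) : ℤ)) →
          (∀ q, pEval (z + u) ((n : ℤ) + 1) q % (m q : ℤ) = ((s q : ℕ) : ℤ))) := by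
      intro r s u hu
      rw [Finset.mem_filter] at hu ⊢
      refine ⟨hu.1, ?_⟩
      intro z n hz q
      have h2 := step_mod m hm c γ α pEval hp z u ((n : ℕ) : ℤ) r hz q
      rw [hu.2] at h2
      exact h2
    -- total counts
    have h1 : ∑ rs : (∀ q, Fin (m q)) × (∀ q, Fin (m q)),
        (Finset.univ.filter (fun t : Fin N => seq t.castSucc = rs.1 ∧ seq t.succ = rs.2)).card = N := by
      have hmt := Finset.card_eq_sum_card_fiberwise
        (f := fun t : Fin N => (seq t.castSucc, seq t.succ)) (s := Finset.univ)
        (t := Finset.univ) (fun _ _ => Finset.mem_univ _)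
      rw [Finset.card_univ, Fintype.card_fin] at hmt
      refine Eq.trans (Finset.sum_congr rfl ?_) hmt.symm
      intro rs _
      congr 1
      ext t
      simp [Prod.ext_iff]
    have h2 : ∑ rs : (∀ q, Fin (m q)) × (∀ q, Fin (m q)),
        ∑ u ∈ (S rs.1).filter (fun u => clsv m hm γ α rs.1 u = rs.2), a rs.1 u = N := by
      conv_rhs => rw [hN]
      rw [Fintype.sum_prod_type]
      apply Finset.sum_congr rfl
      intro r _
      show (∑ y : (∀ q, Fin (m q)), ∑ u ∈ (S r).filter (fun u => clsv m hm γ α r u = y), a r u)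
          = ∑ u ∈ S r, a r u
      exact Finset.sum_fiberwise_of_maps_to (g := fun u => clsv m hm γ α r u)
        (t := Finset.univ) (fun u _ => Finset.mem_univ _) (a r)
    have h3 : ∀ rs : (∀ q, Fin (m q)) × (∀ q, Fin (m q)),
        (Finset.univ.filter (fun t : Fin N => seq t.castSucc = rs.1 ∧ seq t.succ = rs.2)).card
        = ∑ u ∈ (S rs.1).filter (fun u => clsv m hm γ α rs.1 u = rs.2), a rs.1 u := by
      have hle : ∀ rs ∈ (Finset.univ : Finset ((∀ q, Fin (m q)) × (∀ q, Fin (m q)))),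
          ∑ u ∈ (S rs.1).filter (fun u => clsv m hm γ α rs.1 u = rs.2), a rs.1 u ≤
          (Finset.univ.filter (fun t : Fin N => seq t.castSucc = rs.1 ∧ seq t.succ = rs.2)).card := by
        intro rs _
        rw [hEdge rs.1 rs.2]
        exact Finset.sum_le_sum_of_subset (hTsubP rs.1 rs.2)
      have heq := (Finset.sum_eq_sum_iff_of_le hle).1 (by rw [h2, h1])
      intro rs
      exact (heq rs (Finset.mem_univ rs)).symm
    have hassign : ∀ rs : (∀ q, Fin (m q)) × (∀ q, Fin (m q)),
        ∃ g : Fin N → (Fin d → ℤ),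
          (∀ t ∈ Finset.univ.filter (fun t : Fin N => seq t.castSucc = rs.1 ∧ seq t.succ = rs.2),
            g t ∈ (S rs.1).filter (fun u => clsv m hm γ α rs.1 u = rs.2)) ∧
          (∀ u ∈ (S rs.1).filter (fun u => clsv m hm γ α rs.1 u = rs.2),
            ((Finset.univ.filter (fun t : Fin N => seq t.castSucc = rs.1 ∧ seq t.succ = rs.2)).filter
              (fun t => g t = u)).card = a rs.1 u) :=
      fun rs => exists_fiber_counts _ _ _ (h3 rs)
    choose g hg1 hg2 using hassign
    set up : Fin N → (Fin d → ℤ) := fun t => g (seq t.castSucc, seq t.succ) t with hup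
    have hmemT : ∀ t : Fin N, up t ∈ (S (seq t.castSucc)).filter
        (fun u => clsv m hm γ α (seq t.castSucc) u = seq t.succ) := by
      intro t
      exact hg1 (seq t.castSucc, seq t.succ) t
        (Finset.mem_filter.2 ⟨Finset.mem_univ _, rfl, rfl⟩)
    have hSmem : ∀ t : Fin N, up t ∈ S (seq t.castSucc) :=
      fun t => (Finset.mem_filter.1 (hmemT t)).1
    have hclsu : ∀ t : Fin N, clsv m hm γ α (seq t.castSucc) (up t) = seq t.succ :=
      fun t => (Finset.mem_filter.1 (hmemT t)).2
    have hwalk : ∀ j : ℕ, ∀ hj : j ≤ N, ∀ q : Fin k,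
        pEval (posW i0 up j) ((j : ℤ)) q % (m q : ℤ) = ((seq ⟨j, by omega⟩ q : ℕ) : ℤ) := by
      intro j
      induction j with
      | zero =>
        intro hj q
        rw [posW_zero]
        exact_mod_cast h0 q
      | succ j ih =>
        intro hj q
        have hjN : j < N := hj
        have ihj := ih (le_of_lt hjN)
        set t : Fin N := ⟨j, hjN⟩ with htdef
        have hstep := step_mod m hm c γ α pEval hp (posW i0 up j) (up t) ((j : ℤ)) (seq ⟨j, by omega⟩)
          ihj q
        have hclst : clsv m hm γ α (seq ⟨j, by omega⟩) (up t) = seq ⟨j + 1, by omega⟩ := hclsu t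
        rw [hclst] at hstep
        have hp1 : posW i0 up (j + 1) = posW i0 up j + up t := posW_succ i0 up t
        have hc : ((j + 1 : ℕ) : ℤ) = ((j : ℕ) : ℤ) + 1 := by push_cast; ring
        rw [hp1]
        rw [← hc] at hstep
        exact hstep
    refine ⟨fun t => seq t.castSucc, up, ?_, ?_, ?_⟩
    · intro t
      exact hSmem t
    · intro t q
      have h5 := hwalk (t : ℕ) (le_of_lt t.2) q
      rw [posW_eq_Iio] at h5
      have e1 : (⟨(t : ℕ), by omega⟩ : Fin (N+1)) = t.castSucc := rfl
      rw [e1] at h5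
      exact h5
    · intro r u
      by_cases hu : u ∈ S r
      · set s : ∀ q, Fin (m q) := clsv m hm γ α r u with hsdef
        have huT : u ∈ (S r).filter (fun u => clsv m hm γ α r u = s) :=
          Finset.mem_filter.2 ⟨hu, rfl⟩
        have h6 := hg2 (r, s) u huT
        rw [← h6]
        congr 1
        ext t
        simp only [Finset.mem_filter, Finset.mem_univ, true_and]
        constructor
        · rintro ⟨⟨hc1, hc2⟩, hc3⟩
          refine ⟨hc1, ?_⟩
          show up t = u
          rw [hup]
          simp only
          rw [hc1, hc2]
          exact hc3
        · rintro ⟨hc1, hc3⟩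
          have hsucc : seq t.succ = s := by
            have h7 := hclsu t
            rw [hc1, hc3] at h7
            exact h7.symm
          refine ⟨⟨hc1, hsucc⟩, ?_⟩
          show g (r, s) t = u
          rw [← hc3, hup]
          simp only
          rw [hc1, hsucc]
      · rw [ha r u hu]
        symm
        rw [Finset.card_eq_zero, Finset.eq_empty_iff_forall_notMem]
        intro t ht
        rw [Finset.mem_filter] at ht
        obtain ⟨-, hc1, hc2⟩ := ht
        apply hu
        rw [← hc2, ← hc1]
        exact hSmem t
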